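/- There exist subgroups D and C of the Pauli group P_{1,2} such that: D is isomorphic to the dihedral group of order 8 (DihedralGroup 4), C is cyclic of order 4 and contained in the center of P_{1,2}, the join D ⊔ C equals P_{1,2}, and the intersection D ∩ C has order 2. In other words, P_{1,2} is the weak central product of a dihedral group of order 8 and a cyclic group of order 4 amalgamated over a subgroup of order 2. -/

import Mathlib

open Matrix

/-- The shift matrix `X_k` on `n` qubits: `(X_k)_{u,v} = 1` if `u = v + e_k`, else `0`. -/
def shiftX2 (n : ℕ) (k : Fin n) :
    Matrix (Fin n → ZMod 2) (Fin n → ZMod 2) ℂ :=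
  Matrix.of fun u v => if u = v + Pi.single k 1 then 1 else 0

/-- The clock matrix `Z_k` on `n` qubits: diagonal with `(Z_k)_{v,v} = (−1)^{(v k).val}`. -/
def clockZ2 (n : ℕ) (k : Fin n) :
    Matrix (Fin n → ZMod 2) (Fin n → ZMod 2) ℂ :=
  Matrix.diagonal fun v => (-1 : ℂ) ^ (v k).val

/-- The Pauli group `P_{n,2}` on `n` qubits: the subgroup of the units of the matrix ring
generated by the scalar matrix `i·I` and the shift and clock matrices `X_k`, `Z_k`. -/
noncomputable def PauliGroup2 (n : ℕ) :
    Subgroup (Matrix (Fin n → ZMod 2) (Fin n → ZMod 2) ℂ)ˣ :=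
  Subgroup.closure
    {u : (Matrix (Fin n → ZMod 2) (Fin n → ZMod 2) ℂ)ˣ |
      (u : Matrix (Fin n → ZMod 2) (Fin n → ZMod 2) ℂ) = Complex.I • 1 ∨
      ∃ k : Fin n,
        (u : Matrix (Fin n → ZMod 2) (Fin n → ZMod 2) ℂ) = shiftX2 n k ∨
        (u : Matrix (Fin n → ZMod 2) (Fin n → ZMod 2) ℂ) = clockZ2 n k}

namespace PauliAux

abbrev Q := Fin 1 → ZMod 2
abbrev M := Matrix Q Q ℂ

def b0 : Q := fun _ => 0
def b1 : Q := fun _ => 1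

noncomputable def Xm : M := shiftX2 1 0
noncomputable def Zm : M := clockZ2 1 0

lemma qcases (v : Q) : v = b0 ∨ v = b1 := by
  rcases (by revert v; decide : ∀ x : Q, x = b0 ∨ x = b1) v with h | h <;> [left; right] <;> exact h

lemma univ_eq : (Finset.univ : Finset Q) = {b0, b1} := by decide

lemma sum_eq (f : Q → ℂ) : ∑ v, f v = f b0 + f b1 := by
  rw [univ_eq, Finset.sum_insert (by decide), Finset.sum_singleton]

lemma hA : ¬ ((Pi.single (0:Fin 1) (1:ZMod 2) : Q) = 0) := by decide
lemma hB : b0 = b1 + Pi.single (0:Fin 1) (1:ZMod 2) := by decide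
lemma hC : b1 = b0 + Pi.single (0:Fin 1) (1:ZMod 2) := by decide
lemma hD : ¬ (b0 = b1) := by decide
lemma hD' : ¬ (b1 = b0) := by decide
lemma hE : ¬ (b0 = b0 + Pi.single (0:Fin 1) (1:ZMod 2)) := by decide
lemma hF : ¬ (b1 = b1 + Pi.single (0:Fin 1) (1:ZMod 2)) := by decide
lemma v0 : ((b0 0 : ZMod 2)).val = 0 := rfl
lemma v1 : ((b1 0 : ZMod 2)).val = 1 := rfl

lemma XX : Xm * Xm = 1 := by
  ext u v
  simp only [Xm, shiftX2, Matrix.mul_apply, Matrix.of_apply, Matrix.one_apply, sum_eq,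
    ite_mul, one_mul, zero_mul]
  rcases qcases u with hu | hu <;> rcases qcases v with hv | hv <;> subst hu <;> subst hv <;>
    simp only [eq_true hB, eq_true hC, eq_false hA, eq_false hD, eq_false hD', eq_false hE,
      eq_false hF, if_true, if_false, eq_self_iff_true, add_zero, zero_add]

lemma Z00 : Zm b0 b0 = 1 := by simp [Zm, clockZ2, Matrix.diagonal_apply_eq, v0]
lemma Z11 : Zm b1 b1 = -1 := by simp [Zm, clockZ2, Matrix.diagonal_apply_eq, v1]

lemma ZZ : Zm * Zm = 1 := by
  ext u v
  rw [Zm, clockZ2, Matrix.diagonal_mul_diagonal]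
  rcases qcases u with hu | hu <;> rcases qcases v with hv | hv <;> subst hu <;> subst hv <;>
    simp [Matrix.diagonal_apply, Matrix.one_apply, eq_false hD, eq_false hD', v0, v1]

lemma ZX : Zm * Xm = -(Xm * Zm) := by
  ext u v
  rw [Zm, clockZ2, Xm, Matrix.diagonal_mul, Matrix.neg_apply, Matrix.mul_diagonal]
  rcases qcases u with hu | hu <;> rcases qcases v with hv | hv <;> subst hu <;> subst hv <;>
    simp only [shiftX2, Matrix.of_apply, eq_true hB, eq_true hC, eq_false hE, eq_false hF,
      if_true, if_false, v0, v1, pow_zero, pow_one, mul_zero, zero_mul, mul_one, one_mul,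
      neg_zero, mul_neg, neg_neg]

lemma X00 : Xm b0 b0 = 0 := by
  rw [Xm]; simp only [shiftX2, Matrix.of_apply, eq_false hE, if_false]
lemma XZ00 : (Xm * Zm) b0 b0 = 0 := by
  rw [Zm, clockZ2, Matrix.mul_diagonal, X00, zero_mul]


noncomputable def uX : Mˣ := ⟨Xm, Xm, XX, XX⟩
noncomputable def uZ : Mˣ := ⟨Zm, Zm, ZZ, ZZ⟩
noncomputable def uI : Mˣ :=
  ⟨Complex.I • 1, (-Complex.I) • 1,
    by rw [smul_mul_smul_comm]; simp [Complex.I_mul_I],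
    by rw [smul_mul_smul_comm]; simp [Complex.I_mul_I]⟩

lemma uXX : uX * uX = 1 := Units.ext XX
lemma uZZ : uZ * uZ = 1 := Units.ext ZZ
lemma uZX : uZ * uX = -(uX * uZ) := Units.ext ZX
lemma uI_comm (g : Mˣ) : uI * g = g * uI := by
  apply Units.ext
  show (Complex.I • 1) * (g:M) = (g:M) * (Complex.I • 1)
  rw [smul_mul_assoc, mul_smul_comm, one_mul, mul_one]
lemma uI2 : uI ^ 2 = -1 := by
  apply Units.ext
  show (Complex.I • (1:M)) ^ 2 = -1
  rw [smul_pow]; simp [Complex.I_sq]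
lemma uI4 : uI ^ 4 = 1 := by
  have : uI ^ 4 = (uI ^ 2) ^ 2 := by rw [← pow_mul]
  rw [this, uI2]; simp

noncomputable def uR : Mˣ := uX * uZ
lemma uR2 : uR ^ 2 = -1 := by
  rw [pow_two, uR, mul_assoc, ← mul_assoc uZ uX uZ, uZX, neg_mul, mul_neg, ← mul_assoc,
    ← mul_assoc, uXX, one_mul, uZZ]
end PauliAux
namespace PauliAux
-- more relations
lemma uRX : uR * uX = uX * uR ^ 3 := by
  have h3 : uR ^ 3 = -uR := by
    have : uR ^ 3 = uR ^ 2 * uR := by rw [← pow_succ]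
    rw [this, uR2, neg_mul, one_mul]
  rw [h3, uR, mul_assoc, uZX]
lemma uRkX (k : ℕ) : uR ^ k * uX = uX * uR ^ (3 * k) := by
  induction k with
  | zero => simp
  | succ n ih =>
    rw [pow_succ, mul_assoc, uRX, ← mul_assoc, ih, mul_assoc, ← pow_add]
    ring_nf
lemma uXR : uX * uR = uZ := by rw [uR, ← mul_assoc, uXX, one_mul]
lemma uR4 : uR ^ 4 = 1 := by
  rw [show (4:ℕ) = 2*2 from rfl, pow_mul, uR2]; simp
lemma uI2R2 : uR ^ 2 = uI ^ 2 := by rw [uR2, uI2]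

-- membership
noncomputable def P : Subgroup Mˣ := PauliGroup2 1
lemma uI_mem : uI ∈ P := Subgroup.subset_closure (Or.inl rfl)
lemma uX_mem : uX ∈ P := Subgroup.subset_closure (Or.inr ⟨0, Or.inl rfl⟩)
lemma uZ_mem : uZ ∈ P := Subgroup.subset_closure (Or.inr ⟨0, Or.inr rfl⟩)
noncomputable def pX : ↥P := ⟨uX, uX_mem⟩
noncomputable def pZ : ↥P := ⟨uZ, uZ_mem⟩
noncomputable def pI : ↥P := ⟨uI, uI_mem⟩
noncomputable def pR : ↥P := pX * pZ
lemma pR_val : (pR : Mˣ) = uR := rfl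
lemma pR4 : pR ^ 4 = 1 := by apply Subtype.ext; simpa [show (pR : Mˣ) = uR from rfl] using uR4
lemma pXX : pX * pX = 1 := by apply Subtype.ext; simpa [show (pX : Mˣ) = uX from rfl] using uXX

end PauliAux
namespace PauliAux
lemma pI2R2 : pR ^ 2 = pI ^ 2 := by apply Subtype.ext; simpa [show (pR : Mˣ) = uR from rfl, show (pI : Mˣ) = uI from rfl] using uI2R2
lemma pI_comm (g : ↥P) : pI * g = g * pI := by
  apply Subtype.ext; simpa [show (pI : Mˣ) = uI from rfl] using uI_comm (g : Mˣ)
lemma pI_center : pI ∈ Subgroup.center ↥P :=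
  Subgroup.mem_center_iff.mpr fun g => (pI_comm g).symm
lemma pI4 : pI ^ 4 = 1 := by apply Subtype.ext; simpa [show (pI : Mˣ) = uI from rfl] using uI4
lemma pRkX (k : ℕ) : pR ^ k * pX = pX * pR ^ (3 * k) := by
  apply Subtype.ext; simpa [show (pR : Mˣ) = uR from rfl, show (pX : Mˣ) = uX from rfl] using uRkX k

-- exponent congruence
lemma pR_pow_congr (a b : ℕ) (h : (a : ZMod 4) = b) : pR ^ a = pR ^ b := by
  rw [pow_eq_pow_mod a pR4, pow_eq_pow_mod b pR4]
  congr 1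
  have := (ZMod.natCast_eq_natCast_iff a b 4).mp h
  simpa [Nat.ModEq] using this

open DihedralGroup in
noncomputable def fD : DihedralGroup 4 →* ↥P where
  toFun x := match x with
    | .r i => pR ^ i.val
    | .sr i => pX * pR ^ i.val
  map_one' := by
    show pR ^ (0 : ZMod 4).val = 1
    simp [ZMod.val_zero]
  map_mul' x y := by
    have hcast : ∀ i : ZMod 4, ((i.val : ℕ) : ZMod 4) = i := fun i => ZMod.natCast_rightInverse i
    rcases x with i | i <;> rcases y with j | j
    · show pR ^ (i + j).val = pR ^ i.val * pR ^ j.val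
      rw [← pow_add]
      exact pR_pow_congr _ _ (by push_cast [hcast]; ring)
    · show pX * pR ^ (j - i).val = pR ^ i.val * (pX * pR ^ j.val)
      rw [← mul_assoc, pRkX, mul_assoc, ← pow_add]
      congr 1
      exact pR_pow_congr _ _ (by
        have h0 : (4 : ZMod 4) = 0 := by decide
        push_cast [hcast]; linear_combination (-i : ZMod 4) * h0)
    · show pX * pR ^ (i + j).val = pX * pR ^ i.val * pR ^ j.val
      rw [mul_assoc, ← pow_add]
      congr 1
      exact pR_pow_congr _ _ (by push_cast [hcast]; ring)
    · show pR ^ (j - i).val = pX * pR ^ i.val * (pX * pR ^ j.val)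
      rw [mul_assoc, ← mul_assoc (pR ^ i.val), pRkX, ← mul_assoc, ← mul_assoc, pXX, one_mul,
        ← pow_add]
      exact pR_pow_congr _ _ (by
        have h0 : (4 : ZMod 4) = 0 := by decide
        push_cast [hcast]; linear_combination (-i : ZMod 4) * h0)
end PauliAux
namespace PauliAux
lemma unit_ne {a b : Mˣ} (u v : Q) (h : (a:M) u v ≠ (b:M) u v) : a ≠ b := by
  intro e; exact h (by rw [e])

lemma cI : Complex.I ≠ 1 := by simp [Complex.ext_iff]
lemma cI' : Complex.I ≠ -1 := by simp [Complex.ext_iff]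
lemma cI0 : Complex.I ≠ 0 := Complex.I_ne_zero

lemma uI00 : ((uI : Mˣ) : M) b0 b0 = Complex.I := by
  show (Complex.I • (1:M)) b0 b0 = _
  simp [Matrix.one_apply]
lemma one00 : ((1 : Mˣ) : M) b0 b0 = 1 := by
  show (1:M) b0 b0 = 1; simp [Matrix.one_apply]
lemma one11 : ((1 : Mˣ) : M) b1 b1 = 1 := by
  show (1:M) b1 b1 = 1; simp [Matrix.one_apply]
lemma neg00 (a : Mˣ) : ((-a : Mˣ) : M) b0 b0 = -((a:Mˣ):M) b0 b0 := by
  rw [Units.val_neg]; simp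
lemma uR00 : ((uR : Mˣ) : M) b0 b0 = 0 := XZ00
lemma uX00 : ((uX : Mˣ) : M) b0 b0 = 0 := X00
lemma uZ00 : ((uZ : Mˣ) : M) b0 b0 = 1 := Z00
lemma uZ11 : ((uZ : Mˣ) : M) b1 b1 = -1 := Z11

lemma n_uR : uR ≠ 1 := unit_ne b0 b0 (by rw [uR00, one00]; norm_num)
lemma n_neg1 : (-1 : Mˣ) ≠ 1 := unit_ne b0 b0 (by rw [neg00, one00]; norm_num)
lemma n_negR : -uR ≠ 1 := unit_ne b0 b0 (by rw [neg00, uR00, one00]; norm_num)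
lemma n_uX : uX ≠ 1 := unit_ne b0 b0 (by rw [uX00, one00]; norm_num)
lemma n_uZ : uZ ≠ 1 := unit_ne b1 b1 (by rw [uZ11, one11]; norm_num)
lemma n_negX : -uX ≠ 1 := unit_ne b0 b0 (by rw [neg00, uX00, one00]; norm_num)
lemma n_negZ : -uZ ≠ 1 := unit_ne b0 b0 (by rw [neg00, uZ00, one00]; norm_num)
lemma nI_one : uI ≠ 1 := unit_ne b0 b0 (by rw [uI00, one00]; exact cI)
lemma nI_uR : uI ≠ uR := unit_ne b0 b0 (by rw [uI00, uR00]; exact cI0)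
lemma nI_neg1 : uI ≠ -1 := unit_ne b0 b0 (by rw [uI00, neg00, one00]; exact cI')
lemma nI_negR : uI ≠ -uR := unit_ne b0 b0 (by rw [uI00, neg00, uR00, neg_zero]; exact cI0)
lemma nI_uX : uI ≠ uX := unit_ne b0 b0 (by rw [uI00, uX00]; exact cI0)
lemma nI_uZ : uI ≠ uZ := unit_ne b0 b0 (by rw [uI00, uZ00]; exact cI)
lemma nI_negX : uI ≠ -uX := unit_ne b0 b0 (by rw [uI00, neg00, uX00, neg_zero]; exact cI0)
lemma nI_negZ : uI ≠ -uZ := unit_ne b0 b0 (by rw [uI00, neg00, uZ00]; exact cI')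

lemma uR3 : uR ^ 3 = -uR := by
  have : uR ^ 3 = uR ^ 2 * uR := by rw [← pow_succ]
  rw [this, uR2, neg_mul, one_mul]

-- values of fD
lemma coe_pR_pow (k : ℕ) : ((pR ^ k : ↥P) : Mˣ) = uR ^ k := by
  rw [SubmonoidClass.coe_pow]; rfl
lemma coe_pX_pR_pow (k : ℕ) : ((pX * pR ^ k : ↥P) : Mˣ) = uX * uR ^ k := by
  rw [Subgroup.coe_mul, coe_pR_pow]; rfl

lemma val_cases (i : ZMod 4) : i.val = 0 ∨ i.val = 1 ∨ i.val = 2 ∨ i.val = 3 := by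
  have := ZMod.val_lt i; omega

lemma fD_r_val (k : ℕ) : (fD (DihedralGroup.r (k : ZMod 4)) : Mˣ) = uR ^ (k % 4) := by
  show ((pR ^ (k : ZMod 4).val : ↥P) : Mˣ) = _
  rw [coe_pR_pow, ZMod.val_natCast]

lemma fD_inj : Function.Injective fD := by
  rw [injective_iff_map_eq_one]
  intro a ha
  have hval : ((fD a : ↥P) : Mˣ) = 1 := by rw [ha]; rfl
  rcases a with i | i
  · rcases val_cases i with h | h | h | h
    · have : i = 0 := (ZMod.val_eq_zero i).mp h
      rw [this, ← DihedralGroup.one_def]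
    · exfalso
      rw [show fD (DihedralGroup.r i) = pR ^ i.val from rfl] at hval
      rw [coe_pR_pow, h, pow_one] at hval
      exact n_uR hval
    · exfalso
      rw [show fD (DihedralGroup.r i) = pR ^ i.val from rfl] at hval
      rw [coe_pR_pow, h, uR2] at hval
      exact n_neg1 hval
    · exfalso
      rw [show fD (DihedralGroup.r i) = pR ^ i.val from rfl] at hval
      rw [coe_pR_pow, h, uR3] at hval
      exact n_negR hval
  · exfalso
    rw [show fD (DihedralGroup.sr i) = pX * pR ^ i.val from rfl] at hval
    rw [coe_pX_pR_pow] at hval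
    rcases val_cases i with h | h | h | h <;> rw [h] at hval
    · rw [pow_zero, mul_one] at hval; exact n_uX hval
    · rw [pow_one, uXR] at hval; exact n_uZ hval
    · rw [uR2, mul_neg, mul_one] at hval; exact n_negX hval
    · rw [uR3, mul_neg, uXR] at hval; exact n_negZ hval

noncomputable def D : Subgroup ↥P := Subgroup.closure {pX, pZ}

lemma pX_memD : pX ∈ D := Subgroup.subset_closure (by left; rfl)
lemma pZ_memD : pZ ∈ D := Subgroup.subset_closure (by right; rfl)
lemma pR_memD : pR ∈ D := mul_mem pX_memD pZ_memD

lemma pXR : pX * pR = pZ := Subtype.ext (Units.ext (by exact congrArg Units.val uXR))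

lemma fD_range : fD.range = D := by
  apply le_antisymm
  · rintro - ⟨x, rfl⟩
    rcases x with i | i
    · exact pow_mem pR_memD _
    · exact mul_mem pX_memD (pow_mem pR_memD _)
  · rw [D, Subgroup.closure_le]
    rintro g (rfl | rfl)
    · exact ⟨DihedralGroup.sr 0, by show pX * pR ^ (0:ZMod 4).val = pX; simp [ZMod.val_zero]⟩
    · exact ⟨DihedralGroup.sr 1, by
        show pX * pR ^ (1:ZMod 4).val = pZ
        rw [show (1:ZMod 4).val = 1 from rfl, pow_one, pXR]⟩

lemma pI_not_memD : pI ∉ D := by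
  rw [← fD_range]
  rintro ⟨x, hx⟩
  have hval : ((fD x : ↥P) : Mˣ) = uI := by rw [hx]; rfl
  rcases x with i | i
  · rw [show fD (DihedralGroup.r i) = pR ^ i.val from rfl, coe_pR_pow] at hval
    rcases val_cases i with h | h | h | h <;> rw [h] at hval
    · rw [pow_zero] at hval; exact nI_one hval.symm
    · rw [pow_one] at hval; exact nI_uR hval.symm
    · rw [uR2] at hval; exact nI_neg1 hval.symm
    · rw [uR3] at hval; exact nI_negR hval.symm
  · rw [show fD (DihedralGroup.sr i) = pX * pR ^ i.val from rfl, coe_pX_pR_pow] at hval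
    rcases val_cases i with h | h | h | h <;> rw [h] at hval
    · rw [pow_zero, mul_one] at hval; exact nI_uX hval.symm
    · rw [pow_one, uXR] at hval; exact nI_uZ hval.symm
    · rw [uR2, mul_neg, mul_one] at hval; exact nI_negX hval.symm
    · rw [uR3, mul_neg, uXR] at hval; exact nI_negZ hval.symm
end PauliAux
namespace PauliAux

lemma P_eq : P = Subgroup.closure {uI, uX, uZ} := by
  unfold P PauliGroup2
  congr 1
  ext u
  simp only [Set.mem_setOf_eq, Fin.exists_fin_one, Set.mem_insert_iff, Set.mem_singleton_iff]
  constructor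
  · rintro (h | h | h)
    · exact Or.inl (Units.ext h)
    · exact Or.inr (Or.inl (Units.ext h))
    · exact Or.inr (Or.inr (Units.ext h))
  · rintro (rfl | rfl | rfl)
    · exact Or.inl rfl
    · exact Or.inr (Or.inl rfl)
    · exact Or.inr (Or.inr rfl)

noncomputable def C : Subgroup ↥P := Subgroup.zpowers pI

lemma closure_three : Subgroup.closure {pX, pZ, pI} = (⊤ : Subgroup ↥P) := by
  apply Subgroup.map_injective P.subtype_injective
  rw [show Subgroup.map P.subtype ⊤ = P from by
        rw [← MonoidHom.range_eq_map, Subgroup.range_subtype],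
    MonoidHom.map_closure]
  have himg : P.subtype '' {pX, pZ, pI} = {uI, uX, uZ} := by
    simp only [Set.image_insert_eq, Set.image_singleton]
    show ({uX, uZ, uI} : Set Mˣ) = {uI, uX, uZ}
    ext g; simp; tauto
  rw [himg, ← P_eq]

lemma sup_top : D ⊔ C = ⊤ := by
  rw [eq_top_iff, ← closure_three, Subgroup.closure_le]
  rintro g (rfl | rfl | rfl)
  · exact Subgroup.mem_sup_left pX_memD
  · exact Subgroup.mem_sup_left pZ_memD
  · exact Subgroup.mem_sup_right (Subgroup.mem_zpowers pI)

lemma pI_sq_ne_one : pI ^ 2 ≠ 1 := by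
  intro h
  have : ((pI ^ 2 : ↥P) : Mˣ) = 1 := by rw [h]; rfl
  rw [SubmonoidClass.coe_pow] at this
  exact n_neg1 (by rw [← uI2]; exact this)

lemma orderOf_pI : orderOf pI = 4 := by
  have := orderOf_eq_prime_pow (x := pI) (p := 2) (n := 1)
    (by rw [pow_one]; exact pI_sq_ne_one) (by norm_num [pI4])
  simpa using this

lemma C_cyclic : IsCyclic ↥C :=
  ⟨⟨⟨pI, Subgroup.mem_zpowers pI⟩, by
    rintro ⟨x, n, rfl⟩
    exact ⟨n, by apply Subtype.ext; rw [Subgroup.coe_zpow]⟩⟩⟩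

lemma C_card : Nat.card ↥C = 4 := by rw [C, Nat.card_zpowers, orderOf_pI]

lemma C_central : C ≤ Subgroup.center ↥P := Subgroup.zpowers_le.mpr pI_center

lemma pI_sq_memD : pI ^ 2 ∈ D := by rw [← pI2R2]; exact pow_mem pR_memD 2

lemma inf_eq : D ⊓ C = Subgroup.zpowers (pI ^ 2) := by
  apply le_antisymm
  · rintro g ⟨hD, n, rfl⟩
    rcases Int.even_or_odd n with ⟨m, rfl⟩ | ⟨m, rfl⟩
    · refine ⟨m, ?_⟩
      show (pI ^ (2:ℕ)) ^ m = pI ^ (m + m)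
      rw [← _root_.zpow_natCast pI 2, ← _root_.zpow_mul]
      norm_num [two_mul]
    · exfalso
      apply pI_not_memD
      have h1 : pI ^ (2 * m + 1 : ℤ) = (pI ^ 2) ^ m * pI := by
        rw [_root_.zpow_add, _root_.zpow_mul, zpow_one]
        norm_cast
      have h2 : pI = ((pI ^ 2) ^ m)⁻¹ * pI ^ (2 * m + 1 : ℤ) := by
        rw [h1, ← mul_assoc, inv_mul_cancel, one_mul]
      rw [h2]
      exact mul_mem (inv_mem (zpow_mem pI_sq_memD m)) hD
  · rw [Subgroup.zpowers_le]
    refine ⟨pI_sq_memD, ⟨2, ?_⟩⟩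
    show pI ^ ((2:ℕ):ℤ) = pI ^ (2:ℕ)
    rw [_root_.zpow_natCast]

lemma inf_card : Nat.card ↥(D ⊓ C) = 2 := by
  rw [inf_eq, Nat.card_zpowers]
  exact orderOf_eq_prime (by rw [← pow_mul]; norm_num [pI4]) pI_sq_ne_one

noncomputable def isoD : ↥D ≃* DihedralGroup 4 :=
  (MulEquiv.subgroupCongr fD_range.symm).trans (MonoidHom.ofInjective fD_inj).symm

end PauliAux

/-- `P_{1,2}` is the weak central product of a dihedral group of order `8`
and a central cyclic group of order `4`, amalgamated over a subgroup of order `2`: there are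
subgroups `D ≃ DihedralGroup 4` and `C` cyclic of order `4` with `C ≤ Z(P_{1,2})`,
`D ⊔ C = P_{1,2}` and `|D ∩ C| = 2`. -/
theorem pauli_one_two_weak_central_product :
    ∃ D C : Subgroup ↥(PauliGroup2 1),
      Nonempty (↥D ≃* DihedralGroup 4) ∧
      IsCyclic ↥C ∧ Nat.card ↥C = 4 ∧
      C ≤ Subgroup.center ↥(PauliGroup2 1) ∧
      D ⊔ C = ⊤ ∧
      Nat.card ↥(D ⊓ C) = 2 := by
  exact ⟨PauliAux.D, PauliAux.C, ⟨PauliAux.isoD⟩, PauliAux.C_cyclic, PauliAux.C_card,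
    PauliAux.C_central, PauliAux.sup_top, PauliAux.inf_card⟩
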